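/- Let Φ be strictly stable, γ ∈ (0,1), W symmetric, and X_i := Σ_{j=0}^{i-1} Φ^j W (Φ^j)^T. For a fixed N ≥ 0, the matrix S := Σ_{i=N}^∞ γ^i X_i converges and satisfies the Lyapunov equation S = γ Φ S Φ^T + (γ^{N+1}/(1-γ)) W + γ^N X_N. -/

import Mathlib

open Matrix

section aux
open scoped NNReal ENNReal
attribute [local instance] Matrix.linftyOpNormedAddCommGroup Matrix.linftyOpNormedRing
  Matrix.linftyOpNormedSpace Matrix.linftyOpNormedAlgebra

theorem aux_pow_bound {n : ℕ} (A : Matrix (Fin n) (Fin n) ℂ)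
    (h : ∀ μ ∈ spectrum ℂ A, ‖μ‖ < 1) :
    ∃ C > 0, ∃ r : ℝ, 0 < r ∧ r < 1 ∧ ∀ j : ℕ, ‖A ^ j‖ ≤ C * r ^ j := by
  have hsr : spectralRadius ℂ A < 1 := by
    rcases Nat.eq_zero_or_pos n with hn | hn
    · subst hn
      haveI : Subsingleton (Matrix (Fin 0) (Fin 0) ℂ) :=
        ⟨fun a b => by ext i j; exact absurd i.2 (by omega)⟩
      rw [spectrum.SpectralRadius.of_subsingleton]
      exact zero_lt_one
    · haveI : Nonempty (Fin n) := ⟨⟨0, hn⟩⟩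
      have := spectrum.spectralRadius_lt_of_forall_lt A (r := 1)
        (fun z hz => by simpa [← NNReal.coe_lt_coe, coe_nnnorm] using h z hz)
      simpa using this
  -- choose s : ℝ≥0 with 1 < s and ↑s < (spectralRadius ℂ A)⁻¹
  have hinv : (1 : ℝ≥0∞) < (spectralRadius ℂ A)⁻¹ := by
    rw [ENNReal.lt_inv_iff_lt_inv]
    simpa using hsr
  obtain ⟨s, hs1, hs2⟩ := ENNReal.lt_iff_exists_nnreal_btwn.mp hinv
  have hs1' : (1 : ℝ≥0) < s := by exact_mod_cast hs1
  have H₁ := (spectrum.differentiableOn_inverse_one_sub_smul (𝕜 := ℂ) (a := A)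
    (r := s) hs2).hasFPowerSeriesOnBall (lt_trans zero_lt_one hs1')
  have hrad := ((spectrum.hasFPowerSeriesOnBall_inverse_one_sub_smul ℂ A).exchange_radius H₁).r_le
  obtain ⟨t, ht1, ht2⟩ := exists_between hs1'
  have htrad : (t : ℝ≥0∞) < (FormalMultilinearSeries.radius
      (fun n => ContinuousMultilinearMap.mkPiRing ℂ (Fin n) (A ^ n))) :=
    lt_of_lt_of_le (by exact_mod_cast ht2) hrad
  obtain ⟨C, hC, hCb⟩ := FormalMultilinearSeries.norm_mul_pow_le_of_lt_radius _ htrad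
  refine ⟨C, hC, (t : ℝ)⁻¹, by positivity, ?_, fun j => ?_⟩
  · rw [inv_lt_one_iff₀]; right; exact_mod_cast ht1
  · have := hCb j
    rw [ContinuousMultilinearMap.norm_mkPiRing] at this
    have ht0 : (0:ℝ) < (t:ℝ) ^ j := by positivity
    rw [← le_div_iff₀ ht0] at this
    calc ‖A ^ j‖ ≤ C / (t:ℝ) ^ j := this
      _ = C * ((t:ℝ))⁻¹ ^ j := by rw [inv_pow]; ring

theorem aux_entry_bound {n : ℕ} (Φ : Matrix (Fin n) (Fin n) ℝ)
    (hΦ : ∀ μ ∈ spectrum ℂ (Φ.map (algebraMap ℝ ℂ)), ‖μ‖ < 1) :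
    ∃ C > 0, ∃ r : ℝ, 0 < r ∧ r < 1 ∧ ∀ (j : ℕ) (a b : Fin n), |(Φ ^ j) a b| ≤ C * r ^ j := by
  obtain ⟨C, hC, r, hr0, hr1, hb⟩ := aux_pow_bound (Φ.map (algebraMap ℝ ℂ)) hΦ
  refine ⟨C, hC, r, hr0, hr1, fun j a b => ?_⟩
  have hmap : (Φ.map (algebraMap ℝ ℂ)) ^ j = (Φ ^ j).map (algebraMap ℝ ℂ) := by
    rw [← RingHom.mapMatrix_apply, ← map_pow, RingHom.mapMatrix_apply]
  have h1 : |(Φ ^ j) a b| = ‖((Φ.map (algebraMap ℝ ℂ)) ^ j) a b‖ := by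
    rw [hmap]; simp [Matrix.map_apply, Complex.norm_real]
  rw [h1]
  refine le_trans ?_ (hb j)
  have h2 : ‖((Φ.map (algebraMap ℝ ℂ)) ^ j)‖₊ =
      (Finset.univ.sup fun i => ∑ k, ‖((Φ.map (algebraMap ℝ ℂ)) ^ j) i k‖₊) :=
    Matrix.linfty_opNNNorm_def _
  rw [← coe_nnnorm, ← coe_nnnorm, NNReal.coe_le_coe, h2]
  refine le_trans (Finset.single_le_sum (f := fun k => ‖((Φ.map (algebraMap ℝ ℂ)) ^ j) a k‖₊)
    (fun _ _ => zero_le) (Finset.mem_univ b)) ?_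
  exact Finset.le_sup (f := fun i => ∑ k, ‖((Φ.map (algebraMap ℝ ℂ)) ^ j) i k‖₊) (Finset.mem_univ a)

theorem aux_X_bound {n : ℕ} (Φ W : Matrix (Fin n) (Fin n) ℝ)
    (hΦ : ∀ μ ∈ spectrum ℂ (Φ.map (algebraMap ℝ ℂ)), ‖μ‖ < 1)
    (X : ℕ → Matrix (Fin n) (Fin n) ℝ)
    (hX : ∀ i, X i = ∑ j ∈ Finset.range i, Φ ^ j * W * (Φ ^ j)ᵀ) :
    ∃ M : ℝ, ∀ (i : ℕ) (a b : Fin n), |X i a b| ≤ M := by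
  obtain ⟨C, hC, r, hr0, hr1, hb⟩ := aux_entry_bound Φ hΦ
  set K := ∑ d : Fin n, ∑ c : Fin n, |W c d| with hKdef
  have hK : 0 ≤ K := Finset.sum_nonneg fun _ _ => Finset.sum_nonneg fun _ _ => abs_nonneg _
  set q := r * r with hq
  have hq0 : 0 ≤ q := by positivity
  have hq1 : q < 1 := by nlinarith
  refine ⟨C * C * K * (1 - q)⁻¹, fun i a b => ?_⟩
  rw [hX]
  have hterm : ∀ j, |(Φ ^ j * W * (Φ ^ j)ᵀ) a b| ≤ C * C * K * q ^ j := by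
    intro j
    have he : (Φ ^ j * W * (Φ ^ j)ᵀ) a b
        = ∑ d : Fin n, ∑ c : Fin n, (Φ ^ j) a c * W c d * (Φ ^ j) b d := by
      simp only [Matrix.mul_apply, Matrix.transpose_apply, Finset.sum_mul]
    rw [he]
    calc |∑ d : Fin n, ∑ c : Fin n, (Φ ^ j) a c * W c d * (Φ ^ j) b d|
        ≤ ∑ d : Fin n, ∑ c : Fin n, |(Φ ^ j) a c * W c d * (Φ ^ j) b d| := by
          refine (Finset.abs_sum_le_sum_abs _ _).trans (Finset.sum_le_sum fun d _ => ?_)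
          exact Finset.abs_sum_le_sum_abs _ _
      _ ≤ ∑ d : Fin n, ∑ c : Fin n, (C * r ^ j) * |W c d| * (C * r ^ j) := by
          refine Finset.sum_le_sum fun d _ => Finset.sum_le_sum fun c _ => ?_
          rw [abs_mul, abs_mul]
          have h1 := hb j a c
          have h2 := hb j b d
          have hw : (0:ℝ) ≤ |W c d| := abs_nonneg _
          have hp : (0:ℝ) ≤ C * r ^ j := by positivity
          exact mul_le_mul (mul_le_mul h1 le_rfl hw (by positivity)) h2 (abs_nonneg _)
            (by positivity)
      _ = ∑ d : Fin n, ∑ c : Fin n, (C * C * q ^ j) * |W c d| := by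
          refine Finset.sum_congr rfl fun d _ => Finset.sum_congr rfl fun c _ => ?_
          rw [hq, mul_pow]; ring
      _ = C * C * K * q ^ j := by
          rw [hKdef]; simp only [← Finset.mul_sum]; ring
  calc |(∑ j ∈ Finset.range i, Φ ^ j * W * (Φ ^ j)ᵀ) a b|
      = |∑ j ∈ Finset.range i, (Φ ^ j * W * (Φ ^ j)ᵀ) a b| := by
        rw [Matrix.sum_apply]
    _ ≤ ∑ j ∈ Finset.range i, |(Φ ^ j * W * (Φ ^ j)ᵀ) a b| := Finset.abs_sum_le_sum_abs _ _
    _ ≤ ∑ j ∈ Finset.range i, C * C * K * q ^ j := Finset.sum_le_sum fun j _ => hterm j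
    _ = C * C * K * ∑ j ∈ Finset.range i, q ^ j := (Finset.mul_sum _ _ _).symm
    _ ≤ C * C * K * (1 - q)⁻¹ := by
        refine mul_le_mul_of_nonneg_left ?_ (by positivity)
        refine le_trans (Summable.sum_le_tsum (L := SummationFilter.unconditional ℕ) _ (fun j _ => by positivity) ?_) ?_
        · exact summable_geometric_of_lt_one hq0 hq1
        · rw [tsum_geometric_of_lt_one hq0 hq1]

end aux


/-- For strictly stable `Φ`, `γ ∈ (0,1)`, symmetric `W`, and
`X i = ∑_{j<i} Φ^j W (Φ^j)ᵀ`, the series `S = ∑_{i=N}^∞ γ^i X i` converges and satisfies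
the Lyapunov equation `S = γ Φ S Φᵀ + (γ^{N+1}/(1-γ)) W + γ^N X N`. -/
theorem stmt2 {n : ℕ} (Φ W : Matrix (Fin n) (Fin n) ℝ) (γ : ℝ) (N : ℕ)
    (hγ : γ ∈ Set.Ioo (0 : ℝ) 1) (hW : Wᵀ = W)
    (hΦ : ∀ μ ∈ spectrum ℂ (Φ.map (algebraMap ℝ ℂ)), ‖μ‖ < 1)
    (X : ℕ → Matrix (Fin n) (Fin n) ℝ)
    (hX : ∀ i, X i = ∑ j ∈ Finset.range i, Φ ^ j * W * (Φ ^ j)ᵀ) :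
    Summable (fun i : ℕ => γ ^ (N + i) • X (N + i)) ∧
      (∑' i : ℕ, γ ^ (N + i) • X (N + i)) =
        γ • (Φ * (∑' i : ℕ, γ ^ (N + i) • X (N + i)) * Φᵀ)
          + (γ ^ (N + 1) / (1 - γ)) • W + γ ^ N • X N := by
  obtain ⟨hγ0, hγ1⟩ := hγ
  set f : ℕ → Matrix (Fin n) (Fin n) ℝ := fun i => γ ^ (N + i) • X (N + i) with hf_def
  -- Summability
  obtain ⟨M, hM⟩ := aux_X_bound Φ W hΦ X hX
  have hf : Summable f := by
    refine Pi.summable.mpr ?_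
    intro a
    rw [Pi.summable]
    intro b
    have hent : ∀ i, f i a b = γ ^ (N + i) * X (N + i) a b := fun i => rfl
    refine Summable.of_norm_bounded (g := fun i => (max M 0) * γ ^ N * γ ^ i) ?_ fun i => ?_
    · exact (summable_geometric_of_lt_one hγ0.le hγ1).mul_left _
    · rw [hent, Real.norm_eq_abs, abs_mul, abs_of_nonneg (le_of_lt (by positivity)),
        pow_add]
      have := hM (N + i) a b
      calc γ ^ N * γ ^ i * |X (N + i) a b| ≤ γ ^ N * γ ^ i * max M 0 := by
            refine mul_le_mul_of_nonneg_left (le_trans (hM (N+i) a b) (le_max_left _ _))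
              (by positivity)
        _ = max M 0 * γ ^ N * γ ^ i := by ring
  refine ⟨hf, ?_⟩
  -- recursion for X
  have hXsucc : ∀ m, X (m + 1) = Φ * X m * Φᵀ + W := by
    intro m
    rw [hX, hX, Finset.sum_range_succ']
    congr 1
    · rw [Finset.mul_sum, Finset.sum_mul]
      refine Finset.sum_congr rfl fun j _ => ?_
      simp [pow_succ', Matrix.transpose_mul, mul_assoc]
    · simp
  have hfrec : ∀ i, f (i + 1) = γ • (Φ * f i * Φᵀ) + (γ ^ (N + 1) * γ ^ i) • W := by
    intro i
    show γ ^ (N + (i + 1)) • X (N + (i + 1)) = _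
    rw [show N + (i + 1) = (N + i) + 1 by ring, hXsucc, smul_add]
    congr 1
    · rw [hf_def]
      simp only [mul_smul_comm, smul_mul_assoc, smul_smul]
      congr 1
      rw [pow_succ]
      ring
    · congr 1
      rw [← pow_add]
      congr 1
      omega
  set S : Matrix (Fin n) (Fin n) ℝ := ∑' i, f i with hS_def
  have h1 : HasSum (fun i => γ • (Φ * f i * Φᵀ)) (γ • (Φ * S * Φᵀ)) :=
    ((hf.hasSum.mul_left Φ).mul_right Φᵀ).const_smul γ
  have h2 : HasSum (fun i => (γ ^ (N + 1) * γ ^ i) • W) ((γ ^ (N + 1) / (1 - γ)) • W) := by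
    have hg := ((hasSum_geometric_of_lt_one hγ0.le hγ1).mul_left (γ ^ (N + 1))).smul_const W
    simpa [div_eq_mul_inv] using hg
  have h3 : HasSum (fun i => f (i + 1)) (γ • (Φ * S * Φᵀ) + (γ ^ (N + 1) / (1 - γ)) • W) := by
    have heq : (fun i => f (i + 1)) =
        fun i => γ • (Φ * f i * Φᵀ) + (γ ^ (N + 1) * γ ^ i) • W := funext hfrec
    rw [heq]
    exact h1.add h2
  have hkey : S = f 0 + (γ • (Φ * S * Φᵀ) + (γ ^ (N + 1) / (1 - γ)) • W) := by
    conv_lhs => rw [hS_def, Summable.tsum_eq_zero_add hf]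
    rw [h3.tsum_eq]
  have hf0 : f 0 = γ ^ N • X N := by rw [hf_def]; simp
  rw [hf0] at hkey
  conv_lhs => rw [hkey]
  abel
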